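/- Let d ≥ 1 and let j : (0,∞) → [0,∞) be nonincreasing. Suppose there exist c, R, α > 0 such that r^{d+2}·j(r) ≥ c·(r/s)^α·s^{d+2}·j(s) for all 0 < s ≤ r ≤ R. Then there exists C > 0 such that m₂(r) ≤ C·r^{d+2}·j(r) for all r ∈ (0, R]. -/

import Mathlib

open MeasureTheory Metric ENNReal

/-- Truncated second moment `m₂(r) = ∫_{B(0,r)} |x|² j(|x|) dx` in `ℝ^d`. -/
noncomputable def m2 (d : ℕ) (j : ℝ → ℝ) (r : ℝ) : ℝ≥0∞ :=
  ∫⁻ x in Metric.ball (0 : EuclideanSpace ℝ (Fin d)) r,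
    ENNReal.ofReal (‖x‖ ^ 2 * j ‖x‖)

theorem stmt2 (d : ℕ) (hd : 1 ≤ d) (j : ℝ → ℝ)
    (hnonneg : ∀ r : ℝ, 0 < r → 0 ≤ j r)
    (hmono : AntitoneOn j (Set.Ioi (0 : ℝ)))
    (c R α : ℝ) (hc : 0 < c) (hR : 0 < R) (hα : 0 < α)
    (hscale : ∀ s r : ℝ, 0 < s → s ≤ r → r ≤ R →
      c * (r / s) ^ α * (s ^ (d + 2) * j s) ≤ r ^ (d + 2) * j r) :
    ∃ C : ℝ, 0 < C ∧ ∀ r : ℝ, 0 < r → r ≤ R →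
      m2 d j r ≤ ENNReal.ofReal (C * (r ^ (d + 2) * j r)) := by
  set E := EuclideanSpace ℝ (Fin d)
  set V : ℝ≥0∞ := volume (ball (0 : E) 1) with hVdef
  have hV0 : 0 < V := measure_ball_pos _ _ one_pos
  have hVt : V < ⊤ := measure_ball_lt_top
  have hVr : 0 < V.toReal := ENNReal.toReal_pos hV0.ne' hVt.ne
  set q : ℝ := (2 : ℝ) ^ (-α) with hqdef
  have hq0 : 0 < q := Real.rpow_pos_of_pos two_pos _
  have hq1 : q < 1 := Real.rpow_lt_one_of_one_lt_of_neg one_lt_two (neg_neg_iff_pos.mpr hα)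
  have hq2 : 0 < 1 - q := sub_pos.mpr hq1
  refine ⟨(2 ^ (d + 2) / c) * (q * (1 - q)⁻¹) * V.toReal,
    mul_pos (mul_pos (div_pos (by positivity) hc) (mul_pos hq0 (inv_pos.mpr hq2))) hVr,
    fun r hr0 hrR => ?_⟩
  set D : ℝ := r ^ (d + 2) * j r with hDdef
  have hD0 : 0 ≤ D := mul_nonneg (by positivity) (hnonneg r hr0)
  set K : ℝ := 2 ^ (d + 2) / c * D with hKdef
  have hK0 : 0 ≤ K := mul_nonneg (by positivity) hD0
  -- key real estimate per k
  have hkey : ∀ k : ℕ, (r / 2 ^ k) ^ (d + 2) * j (r / 2 ^ (k + 1)) ≤ K * (q * q ^ k) := by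
    intro k
    set s : ℝ := r / 2 ^ (k + 1) with hsdef
    have hs0 : 0 < s := by positivity
    have hsr : s ≤ r := by
      rw [hsdef]
      exact div_le_self hr0.le (one_le_pow₀ (by norm_num))
    have hrs : r / s = 2 ^ (k + 1) := by
      rw [hsdef]; field_simp
    have hpow : ((2 : ℝ) ^ (k + 1)) ^ α * q ^ (k + 1) = 1 := by
      rw [hqdef, ← Real.rpow_natCast (2 : ℝ) (k + 1), ← Real.rpow_natCast ((2:ℝ) ^ (-α)) (k + 1),
        ← Real.rpow_mul (by norm_num), ← Real.rpow_mul (by norm_num),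
        ← Real.rpow_add two_pos]
      have : ((k + 1 : ℕ) : ℝ) * α + (-α) * ((k + 1 : ℕ) : ℝ) = 0 := by ring
      rw [this, Real.rpow_zero]
    have h2 := hscale s r hs0 hsr hrR
    rw [hrs] at h2
    have h3 : s ^ (d + 2) * j s ≤ q ^ (k + 1) / c * D := by
      have h4 := mul_le_mul_of_nonneg_left h2
        (le_of_lt (div_pos (pow_pos hq0 (k + 1)) hc))
      calc s ^ (d + 2) * j s
          = q ^ (k + 1) / c * (c * ((2:ℝ) ^ (k + 1)) ^ α * (s ^ (d + 2) * j s)) := by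
            calc s ^ (d + 2) * j s
                = (((2:ℝ) ^ (k + 1)) ^ α * q ^ (k + 1)) * (s ^ (d + 2) * j s) * (c / c) := by
                  rw [hpow, div_self hc.ne']; ring
              _ = q ^ (k + 1) / c * (c * ((2:ℝ) ^ (k + 1)) ^ α * (s ^ (d + 2) * j s)) := by
                  ring
        _ ≤ q ^ (k + 1) / c * D := h4
    have h2s : r / 2 ^ k = 2 * s := by
      rw [hsdef]; field_simp; ring
    calc (r / 2 ^ k) ^ (d + 2) * j s = 2 ^ (d + 2) * (s ^ (d + 2) * j s) := by
          rw [h2s, mul_pow]; ring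
      _ ≤ 2 ^ (d + 2) * (q ^ (k + 1) / c * D) :=
          mul_le_mul_of_nonneg_left h3 (by positivity)
      _ = K * (q * q ^ k) := by rw [hKdef, pow_succ]; ring
  -- the annuli
  set A : ℕ → Set E := fun k => ball (0 : E) (r / 2 ^ k) \ ball (0 : E) (r / 2 ^ (k + 1))
    with hAdef
  have hAmeas : ∀ k, MeasurableSet (A k) := fun k =>
    measurableSet_ball.diff measurableSet_ball
  have hsub : ball (0 : E) r \ {0} ⊆ ⋃ k, A k := by
    intro x hx
    obtain ⟨hxr, hx0⟩ := hx
    rw [mem_ball_zero_iff] at hxr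
    have hxn : 0 < ‖x‖ := norm_pos_iff.mpr (by simpa using hx0)
    have hex : ∃ n : ℕ, r ≤ ‖x‖ * 2 ^ (n + 1) := by
      obtain ⟨n, hn⟩ := pow_unbounded_of_one_lt (r / ‖x‖) (one_lt_two (α := ℝ))
      refine ⟨n, ?_⟩
      have h1 : r / ‖x‖ ≤ 2 ^ (n + 1) :=
        hn.le.trans (pow_le_pow_right₀ (by norm_num) (Nat.le_succ n))
      calc r = r / ‖x‖ * ‖x‖ := by field_simp
        _ ≤ 2 ^ (n + 1) * ‖x‖ := by
            exact mul_le_mul_of_nonneg_right h1 hxn.le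
        _ = ‖x‖ * 2 ^ (n + 1) := by ring
    set k := Nat.find hex with hk
    refine Set.mem_iUnion.mpr ⟨k, ?_, ?_⟩
    · rw [mem_ball_zero_iff (E := EuclideanSpace ℝ (Fin d))]
      rcases Nat.eq_zero_or_pos k with h | h
      · rw [h]; simpa using hxr
      · obtain ⟨m, hm⟩ := Nat.exists_eq_succ_of_ne_zero h.ne'
        have hm2 : ¬ r ≤ ‖x‖ * 2 ^ (m + 1) :=
          Nat.find_min hex (show m < Nat.find hex by rw [← hk, hm]; exact Nat.lt_succ_self m)
        push_neg at hm2
        rw [hm, lt_div_iff₀ (by positivity)]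
        simpa [mul_comm] using hm2
    · rw [mem_ball_zero_iff (E := EuclideanSpace ℝ (Fin d)), not_lt]
      have := Nat.find_spec hex
      rw [div_le_iff₀ (by positivity)]
      linarith [this]
  -- the measure estimate
  have hball : ∀ k : ℕ, volume (ball (0 : E) (r / 2 ^ k))
      = ENNReal.ofReal ((r / 2 ^ k) ^ d) * V := by
    intro k
    rw [hVdef, Measure.addHaar_ball_of_pos volume (0 : E) (by positivity : 0 < r / 2 ^ k)]
    have hfr : Module.finrank ℝ E = d := finrank_euclideanSpace_fin
    rw [hfr]
  have hterm : ∀ k : ℕ, (∫⁻ x in A k, ENNReal.ofReal (‖x‖ ^ 2 * j ‖x‖))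
      ≤ ENNReal.ofReal (K * (q * q ^ k)) * V := by
    intro k
    have hin : 0 < r / 2 ^ (k + 1) := by positivity
    have hb1 : (∫⁻ x in A k, ENNReal.ofReal (‖x‖ ^ 2 * j ‖x‖))
        ≤ ∫⁻ _ in A k, ENNReal.ofReal ((r / 2 ^ k) ^ 2 * j (r / 2 ^ (k + 1))) := by
      refine setLIntegral_mono' (hAmeas k) fun x hx => ?_
      obtain ⟨hx1, hx2⟩ := hx
      rw [mem_ball_zero_iff (E := EuclideanSpace ℝ (Fin d))] at hx1
      rw [mem_ball_zero_iff (E := EuclideanSpace ℝ (Fin d)), not_lt] at hx2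
      have hxn : 0 < ‖x‖ := lt_of_lt_of_le hin hx2
      refine ENNReal.ofReal_le_ofReal (mul_le_mul ?_ ?_ (hnonneg _ hxn) (by positivity))
      · exact pow_le_pow_left₀ (norm_nonneg _) hx1.le 2
      · exact hmono (Set.mem_Ioi.mpr hin) (Set.mem_Ioi.mpr hxn) hx2
    rw [setLIntegral_const] at hb1
    refine hb1.trans ?_
    calc ENNReal.ofReal ((r / 2 ^ k) ^ 2 * j (r / 2 ^ (k + 1))) * volume (A k)
        ≤ ENNReal.ofReal ((r / 2 ^ k) ^ 2 * j (r / 2 ^ (k + 1)))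
            * volume (ball (0 : E) (r / 2 ^ k)) :=
          mul_le_mul_right (measure_mono Set.diff_subset) _
      _ = ENNReal.ofReal ((r / 2 ^ k) ^ 2 * j (r / 2 ^ (k + 1)) * (r / 2 ^ k) ^ d) * V := by
          rw [hball k, ← mul_assoc, ← ENNReal.ofReal_mul
            (mul_nonneg (by positivity) (hnonneg _ hin))]
      _ = ENNReal.ofReal ((r / 2 ^ k) ^ (d + 2) * j (r / 2 ^ (k + 1))) * V := by
          congr 2; ring
      _ ≤ ENNReal.ofReal (K * (q * q ^ k)) * V :=
          mul_le_mul_left (ENNReal.ofReal_le_ofReal (hkey k)) _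
  -- summability of the geometric bound
  have hsummable : Summable (fun k : ℕ => K * (q * q ^ k)) :=
    (((summable_geometric_of_lt_one hq0.le hq1).mul_left q).mul_left K)
  have htsum : (∑' k : ℕ, K * (q * q ^ k)) = K * (q * (1 - q)⁻¹) := by
    rw [tsum_mul_left, tsum_mul_left, tsum_geometric_of_lt_one hq0.le hq1]
  -- put everything together
  have hf0 : ENNReal.ofReal (‖(0 : E)‖ ^ 2 * j ‖(0 : E)‖) = 0 := by
    simp
  calc m2 d j r ≤ ∫⁻ x in (ball (0 : E) r \ {0}) ∪ {0},
        ENNReal.ofReal (‖x‖ ^ 2 * j ‖x‖) := by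
        refine lintegral_mono_set fun x hx => ?_
        by_cases h : x = 0
        · exact Or.inr (by simp [h])
        · exact Or.inl ⟨hx, h⟩
    _ ≤ (∫⁻ x in ball (0 : E) r \ {0}, ENNReal.ofReal (‖x‖ ^ 2 * j ‖x‖))
        + ∫⁻ x in ({0} : Set E), ENNReal.ofReal (‖x‖ ^ 2 * j ‖x‖) :=
        lintegral_union_le _ _ _
    _ = ∫⁻ x in ball (0 : E) r \ {0}, ENNReal.ofReal (‖x‖ ^ 2 * j ‖x‖) := by
        rw [lintegral_singleton, hf0, zero_mul, add_zero]
    _ ≤ ∫⁻ x in ⋃ k, A k, ENNReal.ofReal (‖x‖ ^ 2 * j ‖x‖) := lintegral_mono_set hsub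
    _ ≤ ∑' k : ℕ, ∫⁻ x in A k, ENNReal.ofReal (‖x‖ ^ 2 * j ‖x‖) := lintegral_iUnion_le _ _
    _ ≤ ∑' k : ℕ, ENNReal.ofReal (K * (q * q ^ k)) * V := ENNReal.tsum_le_tsum hterm
    _ = (∑' k : ℕ, ENNReal.ofReal (K * (q * q ^ k))) * V := ENNReal.tsum_mul_right
    _ = ENNReal.ofReal (K * (q * (1 - q)⁻¹)) * V := by
        rw [← ENNReal.ofReal_tsum_of_nonneg
          (fun k => mul_nonneg hK0 (mul_nonneg hq0.le (pow_nonneg hq0.le k))) hsummable, htsum]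
    _ = ENNReal.ofReal (K * (q * (1 - q)⁻¹)) * ENNReal.ofReal V.toReal := by
        rw [ENNReal.ofReal_toReal hVt.ne]
    _ = ENNReal.ofReal (K * (q * (1 - q)⁻¹) * V.toReal) := by
        rw [← ENNReal.ofReal_mul (mul_nonneg hK0 (mul_nonneg hq0.le (by
          have := sub_pos.mpr hq1; positivity)))]
    _ = ENNReal.ofReal ((2 ^ (d + 2) / c) * (q * (1 - q)⁻¹) * V.toReal
          * (r ^ (d + 2) * j r)) := by
        congr 1
        rw [hKdef, hDdef]; ring
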